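/- Let s ≥ 3 and let {c_i} be a family of distinct primitive vectors in ℤ² (up to sign) such that for all distinct indices i, j, k, the pairwise absolute determinants d(u,v) = |det(u v)| satisfy d(c_i,c_j) + d(c_j,c_k) + d(c_k,c_i) ≤ s·d(c_i,c_j)·d(c_j,c_k). Then the s-th powers of the transvections T_{c_i} freely generate a free subgroup of SL(2,ℤ). -/

import Mathlib

/-- The transvection (Dehn twist matrix) along `c = (c₁, c₂)`. -/
def transvection (c : ℤ × ℤ) : Matrix.SpecialLinearGroup (Fin 2) ℤ :=
  ⟨!![1 - c.1 * c.2, c.1 ^ 2; -c.2 ^ 2, 1 + c.1 * c.2], by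
    rw [Matrix.det_fin_two_of]; ring⟩

/-- The geometric intersection number of (the torus curves corresponding to) two
primitive vectors: the absolute value of the determinant. -/
def gInt (u v : ℤ × ℤ) : ℤ := |u.1 * v.2 - u.2 * v.1|

namespace Stmt12

abbrev SL2 := Matrix.SpecialLinearGroup (Fin 2) ℤ

def bf (u v : ℤ × ℤ) : ℤ := u.1 * v.2 - u.2 * v.1

instance : SMul SL2 (ℤ × ℤ) :=
  ⟨fun g v => (g.1 0 0 * v.1 + g.1 0 1 * v.2, g.1 1 0 * v.1 + g.1 1 1 * v.2)⟩

lemma smul_def (g : SL2) (v : ℤ × ℤ) :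
    g • v = (g.1 0 0 * v.1 + g.1 0 1 * v.2, g.1 1 0 * v.1 + g.1 1 1 * v.2) := rfl

instance : MulAction SL2 (ℤ × ℤ) where
  one_smul v := by
    simp [smul_def, Matrix.one_apply]
  mul_smul g h v := by
    simp only [smul_def, Matrix.SpecialLinearGroup.coe_mul, Matrix.mul_apply, Fin.sum_univ_two]
    refine Prod.ext ?_ ?_ <;> dsimp only <;> ring

lemma transvection_smul (c v : ℤ × ℤ) :
    transvection c • v = (v.1 + bf c v * c.1, v.2 + bf c v * c.2) := by
  rw [smul_def]; simp [transvection, bf]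
  constructor <;> ring

lemma transvection_inv_smul (c v : ℤ × ℤ) :
    (transvection c)⁻¹ • v = (v.1 - bf c v * c.1, v.2 - bf c v * c.2) := by
  rw [inv_smul_eq_iff, transvection_smul]
  unfold bf
  refine Prod.ext ?_ ?_ <;> dsimp only <;> ring

lemma transvection_zpow_smul (c : ℤ × ℤ) (n : ℤ) (v : ℤ × ℤ) :
    (transvection c ^ n) • v = (v.1 + n * bf c v * c.1, v.2 + n * bf c v * c.2) := by
  induction n using Int.induction_on generalizing v with
  | zero => simp
  | succ k ih =>
      rw [zpow_add_one, mul_smul, transvection_smul, ih]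
      unfold bf
      refine Prod.ext ?_ ?_ <;> dsimp only <;> ring
  | pred k ih =>
      rw [zpow_sub_one, mul_smul, transvection_inv_smul, ih]
      unfold bf
      refine Prod.ext ?_ ?_ <;> dsimp only <;> ring

lemma pow_s_zpow (c : ℤ × ℤ) (s : ℕ) (n : ℤ) :
    ((transvection c ^ s : SL2) ^ n) = transvection c ^ ((s : ℤ) * n) := by
  rw [← zpow_natCast (transvection c) s, ← zpow_mul]

lemma eq_or_neg {u v : ℤ × ℤ} (hu : IsCoprime u.1 u.2) (hv : IsCoprime v.1 v.2)
    (h : bf u v = 0) : v = u ∨ v = (-u.1, -u.2) := by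
  obtain ⟨x, y, hxy⟩ := hu
  unfold bf at h
  set t := x * v.1 + y * v.2 with ht
  have h1 : t * u.1 = v.1 := by linear_combination y * h + v.1 * hxy
  have h2 : t * u.2 = v.2 := by linear_combination (-x) * h + v.2 * hxy
  have hunit : IsUnit t := hv.isUnit_of_dvd' ⟨u.1, h1.symm⟩ ⟨u.2, h2.symm⟩
  rcases Int.isUnit_iff.mp hunit with h' | h'
  · left; rw [h'] at h1 h2; exact Prod.ext (by linarith) (by linarith)
  · right; rw [h'] at h1 h2
    exact Prod.ext (by simp; linarith) (by simp; linarith)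

lemma exists_zpow {J : Type*} [Subsingleton J] (i : J) (x : FreeGroup J) :
    ∃ n : ℤ, x = FreeGroup.of i ^ n := by
  induction x with
  | C1 => exact ⟨0, by simp⟩
  | of j => exact ⟨1, by rw [zpow_one, Subsingleton.elim j i]⟩
  | inv_of j ih =>
      obtain ⟨n, hn⟩ := ih
      exact ⟨-n, by rw [hn, ← zpow_neg]⟩
  | mul x y ihx ihy =>
      obtain ⟨m, hm⟩ := ihx
      obtain ⟨n, hn⟩ := ihy
      exact ⟨m + n, by rw [hm, hn, zpow_add]⟩

end Stmt12

open Stmt12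

/-- Theorem A: if primitive vectors `c i` (distinct up to sign) have `s`-proportional
geometric intersection numbers, `s ≥ 3`, then the `s`-th powers of the transvections
along them freely generate a free subgroup of `SL(2,ℤ)`. -/
theorem stmt_12 {I : Type*} (s : ℕ) (hs : 3 ≤ s) (c : I → ℤ × ℤ)
    (hprim : ∀ i, IsCoprime (c i).1 (c i).2)
    (hdist : ∀ i j, i ≠ j → c i ≠ c j ∧ c i ≠ (-(c j).1, -(c j).2))
    (hprop : ∀ i j k, i ≠ j → j ≠ k → k ≠ i →
      gInt (c i) (c j) + gInt (c j) (c k) + gInt (c k) (c i)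
        ≤ s * (gInt (c i) (c j) * gInt (c j) (c k))) :
    Function.Injective (FreeGroup.lift (fun i : I => (transvection (c i)) ^ s)) := by
  classical
  set a : I → SL2 := fun i => transvection (c i) ^ s with ha
  have gInt_bf : ∀ u v : ℤ × ℤ, gInt u v = |bf u v| := fun _ _ => rfl
  have bf_comm : ∀ u v : ℤ × ℤ, bf u v = -(bf v u) := by intro u v; unfold bf; ring
  have gInt_comm : ∀ u v : ℤ × ℤ, gInt u v = gInt v u := by
    intro u v; rw [gInt_bf, gInt_bf, bf_comm, abs_neg]
  have hpos : ∀ i j : I, i ≠ j → 0 < gInt (c i) (c j) := by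
    intro i j hij
    rw [gInt_bf]
    refine abs_pos.mpr fun h => ?_
    rcases eq_or_neg (hprim i) (hprim j) h with h' | h'
    · exact (hdist j i hij.symm).1 h'
    · exact (hdist j i hij.symm).2 h'
  have hfaith : ∀ (i : I) (n : ℤ), a i ^ n = 1 → n = 0 := by
    intro i n h
    have h2 := congrArg (fun g : SL2 => g • ((-(c i).2, (c i).1) : ℤ × ℤ)) h
    simp only [ha, pow_s_zpow, transvection_zpow_smul, one_smul] at h2
    have e1 := congrArg Prod.fst h2
    have e2 := congrArg Prod.snd h2
    simp only [bf] at e1 e2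
    have hc : (c i).1 ≠ 0 ∨ (c i).2 ≠ 0 := by
      by_contra hcon
      push_neg at hcon
      have := hprim i
      rw [hcon.1, hcon.2] at this
      exact not_isCoprime_zero_zero this
    have hsq : 0 < (c i).1 ^ 2 + (c i).2 ^ 2 := by
      rcases hc with h' | h' <;> positivity
    have hkey : (s : ℤ) * n * ((c i).1 ^ 2 + (c i).2 ^ 2) ^ 2 = 0 := by
      linear_combination (c i).1 * e1 + (c i).2 * e2
    have hs0 : (s : ℤ) ≠ 0 := by positivity
    have := mul_eq_zero.mp hkey
    rcases this with h' | h'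
    · rcases mul_eq_zero.mp h' with h'' | h''
      · exact absurd h'' hs0
      · exact h''
    · exact absurd h' (by positivity)
  rcases subsingleton_or_nontrivial I with hI | hI
  · rw [injective_iff_map_eq_one]
    intro x hx
    rcases isEmpty_or_nonempty I with hE | hE
    · have hall : ∀ y : FreeGroup I, y = 1 := by
        intro y
        induction y with
        | C1 => rfl
        | of j => exact (IsEmpty.false j).elim
        | inv_of j _ => exact (IsEmpty.false j).elim
        | mul z w hz hw => rw [hz, hw, one_mul]
      exact hall x
    · obtain ⟨i⟩ := hE
      obtain ⟨n, rfl⟩ := exists_zpow i x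
      rw [map_zpow, FreeGroup.lift_apply_of] at hx
      rw [hfaith i n hx, zpow_zero]
  · have key : FreeGroup.lift a =
        (Monoid.CoprodI.lift fun i : I => FreeGroup.lift fun _ : Unit => a i).comp
          (@freeGroupEquivCoprodI I).toMonoidHom := by
      ext i
      simp
    rw [key, MonoidHom.coe_comp]
    refine Function.Injective.comp ?_ (MulEquiv.injective freeGroupEquivCoprodI)
    set X : I → Set (ℤ × ℤ) := fun i => {v | ∀ j, j ≠ i → gInt (c i) v < gInt (c j) v} with hX
    refine Monoid.CoprodI.lift_injective_of_ping_pong _ ?_ X ?_ ?_ ?_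
    · refine Or.inr ⟨Classical.arbitrary I, ?_⟩
      have h1 : (3 : Cardinal) ≤ Cardinal.aleph0 := by
        exact_mod_cast (Cardinal.nat_lt_aleph0 3).le
      exact h1.trans (Cardinal.aleph0_le_mk (FreeGroup Unit))
    · intro i
      refine ⟨c i, fun j hj => ?_⟩
      have h0 : gInt (c i) (c i) = 0 := by
        rw [gInt_bf]
        have : bf (c i) (c i) = 0 := by unfold bf; ring
        rw [this, abs_zero]
      rw [h0]
      exact hpos j i hj
    · intro i j hij
      refine Set.disjoint_left.mpr fun v hvi hvj => ?_
      have h1 := hvi j (Ne.symm hij)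
      have h2 := hvj i hij
      linarith
    · intro i j hij h hne
      obtain ⟨n, rfl⟩ := exists_zpow () h
      have hn : n ≠ 0 := fun h0 => hne (by rw [h0, zpow_zero])
      rw [map_zpow, FreeGroup.lift_apply_of]
      intro w hw
      obtain ⟨u, hu, rfl⟩ := Set.mem_smul_set.mp hw
      have hu' : ∀ k, k ≠ j → gInt (c j) u < gInt (c k) u := hu
      -- compute the action
      set m : ℤ := (s : ℤ) * n with hm
      have hsmul : a i ^ n • u =
          (u.1 + m * bf (c i) u * (c i).1, u.2 + m * bf (c i) u * (c i).2) := by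
        rw [ha]
        dsimp only
        rw [pow_s_zpow, transvection_zpow_smul]
      rw [hsmul]
      set w' : ℤ × ℤ := (u.1 + m * bf (c i) u * (c i).1, u.2 + m * bf (c i) u * (c i).2)
        with hw'
      intro k hk
      -- abbreviations
      have hA : bf (c i) w' = bf (c i) u := by rw [hw']; unfold bf; dsimp only; ring
      have hB : bf (c k) w' = bf (c k) u + m * bf (c i) u * bf (c k) (c i) := by
        rw [hw']; unfold bf; dsimp only; ring
      set A := |bf (c i) u| with hAa
      set b := |bf (c k) u| with hb
      set D := |bf (c k) (c i)| with hD
      have hA1 : 1 ≤ A := by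
        have := hu' i hij
        rw [gInt_bf, gInt_bf] at this
        have h0 : 0 ≤ |bf (c j) u| := abs_nonneg _
        omega
      have hD1 : 1 ≤ D := by
        have := hpos k i hk
        rw [gInt_bf] at this; omega
      have hmabs : (s : ℤ) ≤ |m| := by
        rw [hm, abs_mul, Int.abs_natCast]
        have h1 : 1 ≤ |n| := Int.one_le_abs hn
        nlinarith [Int.natCast_nonneg s]
      -- key inequality : A + b < s * A * D
      have hkey : A + b < (s : ℤ) * A * D := by
        by_cases hkj : k = j
        · subst hkj
          have hb' : b < A := by
            have := hu' i hij
            rw [gInt_bf, gInt_bf] at this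
            omega
          have hs3 : (3 : ℤ) ≤ (s : ℤ) := by exact_mod_cast hs
          have t1 : 3 * A ≤ (s : ℤ) * A := by
            nlinarith [mul_nonneg (show (0:ℤ) ≤ (s:ℤ) - 3 by omega) (show (0:ℤ) ≤ A by omega)]
          have t2 : (s : ℤ) * A ≤ (s : ℤ) * A * D := by
            nlinarith [mul_nonneg (mul_nonneg (show (0:ℤ) ≤ (s:ℤ) by omega)
              (show (0:ℤ) ≤ A by omega)) (show (0:ℤ) ≤ D - 1 by omega)]
          linarith
        · -- k ≠ j and k ≠ i and i ≠ j
          set e := |bf (c j) u| with he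
          set E := |bf (c i) (c j)| with hE'
          set F := |bf (c j) (c k)| with hF
          have hE1 : 1 ≤ E := by
            have := hpos i j hij; rw [gInt_bf] at this; omega
          have hF1 : 1 ≤ F := by
            have := hpos j k (Ne.symm hkj); rw [gInt_bf] at this; omega
          have heA : e < A := by
            have := hu' i hij
            rw [gInt_bf, gInt_bf] at this; omega
          have plucker : bf (c k) u * bf (c i) (c j) =
              bf (c k) (c i) * bf u (c j) - bf (c k) (c j) * bf u (c i) := by
            unfold bf; ring
          have habs : b * E ≤ D * e + F * A := by
            have h1 : |bf (c k) u * bf (c i) (c j)| ≤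
                |bf (c k) (c i) * bf u (c j)| + |bf (c k) (c j) * bf u (c i)| := by
              rw [plucker]
              exact abs_sub _ _
            rw [abs_mul, abs_mul, abs_mul] at h1
            have h2 : |bf u (c j)| = e := by rw [bf_comm u (c j), abs_neg, he]
            have h3 : |bf u (c i)| = A := by rw [bf_comm u (c i), abs_neg, hAa]
            have h4 : |bf (c k) (c j)| = F := by rw [bf_comm (c k) (c j), abs_neg, hF]
            rw [h2, h3, h4] at h1
            rw [← hb, ← hE', ← hD] at h1
            linarith
          have htri : D + E + F ≤ (s : ℤ) * (D * E) := by
            have htr := hprop k i j hk hij (Ne.symm hkj)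
            simp only [gInt_bf] at htr
            rw [← hD, ← hE', ← hF] at htr
            linarith
          have h5 : E * (A + b) < E * ((s : ℤ) * A * D) := by
            nlinarith [mul_le_mul_of_nonneg_left (show e ≤ A - 1 by omega)
                (show (0:ℤ) ≤ D by omega),
              mul_le_mul_of_nonneg_right htri (show (0:ℤ) ≤ A by omega)]
          exact lt_of_mul_lt_mul_left h5 (by omega)
      -- conclude
      have hlow : (s : ℤ) * A * D - b ≤ |bf (c k) w'| := by
        rw [hB]
        have h1 : |m * bf (c i) u * bf (c k) (c i)| - |(-(bf (c k) u))| ≤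
            |m * bf (c i) u * bf (c k) (c i) - (-(bf (c k) u))| :=
          abs_sub_abs_le_abs_sub _ _
        rw [abs_neg, sub_neg_eq_add] at h1
        have h2 : |m * bf (c i) u * bf (c k) (c i)| = |m| * A * D := by
          rw [abs_mul, abs_mul]
        have h3 : bf (c k) u + m * bf (c i) u * bf (c k) (c i) =
            m * bf (c i) u * bf (c k) (c i) + bf (c k) u := by ring
        rw [h3]
        have h4 : (s : ℤ) * A * D ≤ |m| * A * D := by
          nlinarith [mul_nonneg (mul_nonneg (abs_nonneg ((s:ℤ)*n)) (show (0:ℤ) ≤ A by omega))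
            (show (0:ℤ) ≤ D by omega), mul_nonneg (show (0:ℤ) ≤ A by omega)
            (show (0:ℤ) ≤ D by omega), mul_nonneg (mul_nonneg (show (0:ℤ) ≤ (s:ℤ) by omega)
            (show (0:ℤ) ≤ A by omega)) (show (0:ℤ) ≤ D by omega)]
        rw [h2, ← hb] at h1
        linarith
      show gInt (c i) w' < gInt (c k) w'
      rw [gInt_bf, gInt_bf, hA]
      have : (A : ℤ) < (s : ℤ) * A * D - b := by linarith
      calc |bf (c i) u| = A := rfl
        _ < (s : ℤ) * A * D - b := this
        _ ≤ |bf (c k) w'| := hlow
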